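/- Let n_u be the total number of users, t the number of corrupted users with 0 < t ≤ n_u, n an even group size with n ≤ t and n/2 ≤ n_u - t, and n_g = ⌊n_u/n⌋ ≥ 1. Then the probability (1/n_g) · C(t, n/2)·C(n_u - t, n/2) / C(n_u, n) is at most (2^n/n_g) · ((n_u - t)/t)^(n/2) · (t/n_u)^n. -/
import Mathlib

open Finset

lemma prod_range_two_mul (k : ℕ) (f : ℕ → ℕ) :
    ∏ i ∈ range (2 * k), f i = ∏ i ∈ range k, (f (2 * i) * f (2 * i + 1)) := by
  induction k with
  | zero => simp
  | succ k ih =>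
    have h : 2 * (k + 1) = (2 * k) + 1 + 1 := by ring
    rw [h, prod_range_succ, prod_range_succ, ih, prod_range_succ]
    ring

lemma per_factor (k t u i : ℕ) (hik : i < k) (hkt : k ≤ t) (hku : k ≤ u) :
    (2 * k - 2 * i) * (2 * k - 2 * i - 1) * ((t - i) * (u - i) * (t + u) ^ 2)
      ≤ (2 * k - 2 * i) ^ 2 * (t * u) * ((t + u - 2 * i) * (t + u - 2 * i - 1)) := by
  have h1 : i ≤ t := le_trans (le_of_lt hik) hkt
  have h2 : i ≤ u := le_trans (le_of_lt hik) hku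
  have h3 : 2 * i ≤ 2 * k := by omega
  have h4 : 1 ≤ 2 * k - 2 * i := by omega
  have h5 : 2 * i ≤ t + u := by omega
  have h6 : 1 ≤ t + u - 2 * i := by omega
  zify [h1, h2, h3, h4, h5, h6]
  set T := (t : ℤ); set U := (u : ℤ); set I := (i : ℤ); set K := (k : ℤ)
  have hI : (0:ℤ) ≤ I := Int.ofNat_nonneg i
  have hIK : I < K := Int.ofNat_lt.mpr hik
  have hKT : K ≤ T := Int.ofNat_le.mpr hkt
  have hKU : K ≤ U := Int.ofNat_le.mpr hku
  have ha : (T - I) * (U - I) * (T + U) ^ 2 ≤ T * U * (T + U - 2 * I) ^ 2 := by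
    nlinarith [mul_nonneg (mul_nonneg hI (by linarith : (0:ℤ) ≤ T + U - I)) (sq_nonneg (T - U))]
  have hb : (2 * K - 2 * I - 1) * (T + U - 2 * I) ≤ (2 * K - 2 * I) * (T + U - 2 * I - 1) := by
    nlinarith [hKT, hKU, hIK]
  have hBpos : (0:ℤ) ≤ 2 * K - 2 * I := by linarith
  have hApos : (0:ℤ) ≤ 2 * K - 2 * I - 1 := by linarith
  have hPpos : (0:ℤ) ≤ T + U - 2 * I := by linarith
  have hTU : (0:ℤ) ≤ T * U := by nlinarith
  calc (2 * K - 2 * I) * (2 * K - 2 * I - 1) * ((T - I) * (U - I) * (T + U) ^ 2)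
      ≤ (2 * K - 2 * I) * (2 * K - 2 * I - 1) * (T * U * (T + U - 2 * I) ^ 2) :=
        mul_le_mul_of_nonneg_left ha (by positivity)
    _ = (2 * K - 2 * I) * (T * U) * (T + U - 2 * I) * ((2 * K - 2 * I - 1) * (T + U - 2 * I)) := by
        ring
    _ ≤ (2 * K - 2 * I) * (T * U) * (T + U - 2 * I) * ((2 * K - 2 * I) * (T + U - 2 * I - 1)) :=
        mul_le_mul_of_nonneg_left hb (by positivity)
    _ = (2 * K - 2 * I) ^ 2 * (T * U) * ((T + U - 2 * I) * (T + U - 2 * I - 1)) := by ring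

lemma key_nat (k t u : ℕ) (hkt : k ≤ t) (hku : k ≤ u) :
    (2 * k).factorial * t.descFactorial k * u.descFactorial k * (t + u) ^ (2 * k)
      ≤ 4 ^ k * k.factorial ^ 2 * (t * u) ^ k * (t + u).descFactorial (2 * k) := by
  have hfac : (2 * k).factorial = ∏ i ∈ range k, ((2 * k - 2 * i) * (2 * k - 2 * i - 1)) := by
    rw [← Nat.descFactorial_self (2 * k), Nat.descFactorial_eq_prod_range, prod_range_two_mul]
    exact prod_congr rfl fun i _ => by rw [Nat.sub_sub]
  have hdf : (t + u).descFactorial (2 * k)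
      = ∏ i ∈ range k, ((t + u - 2 * i) * (t + u - 2 * i - 1)) := by
    rw [Nat.descFactorial_eq_prod_range, prod_range_two_mul]
    exact prod_congr rfl fun i _ => by rw [Nat.sub_sub]
  have h4 : 4 ^ k * k.factorial ^ 2 = ∏ i ∈ range k, (2 * k - 2 * i) ^ 2 := by
    have he : ∀ i ∈ range k, (2 * k - 2 * i) ^ 2 = 4 * (k - i) ^ 2 := fun i _ => by
      have h2 : 2 * k - 2 * i = 2 * (k - i) := by omega
      rw [h2, mul_pow]; norm_num
    rw [prod_congr rfl he, prod_mul_distrib, prod_const, card_range, prod_pow,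
      ← Nat.descFactorial_eq_prod_range, Nat.descFactorial_self]
  have hpow : (t + u) ^ (2 * k) = ∏ _i ∈ range k, (t + u) ^ 2 := by
    rw [prod_const, card_range, ← pow_mul]
  have htu : (t * u) ^ k = ∏ _i ∈ range k, (t * u) := by
    rw [prod_const, card_range]
  have hL : (2 * k).factorial * t.descFactorial k * u.descFactorial k * (t + u) ^ (2 * k)
      = ∏ i ∈ range k, ((2 * k - 2 * i) * (2 * k - 2 * i - 1)
          * ((t - i) * (u - i) * (t + u) ^ 2)) := by
    rw [hfac, Nat.descFactorial_eq_prod_range, Nat.descFactorial_eq_prod_range, hpow,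
      ← prod_mul_distrib, ← prod_mul_distrib, ← prod_mul_distrib]
    exact prod_congr rfl fun i _ => by ring
  have hR : 4 ^ k * k.factorial ^ 2 * (t * u) ^ k * (t + u).descFactorial (2 * k)
      = ∏ i ∈ range k, ((2 * k - 2 * i) ^ 2 * (t * u)
          * ((t + u - 2 * i) * (t + u - 2 * i - 1))) := by
    rw [h4, hdf, htu, ← prod_mul_distrib, ← prod_mul_distrib]
  rw [hL, hR]
  exact prod_le_prod' fun i hi => per_factor k t u i (mem_range.mp hi) hkt hku

lemma choose_key (k t u : ℕ) (hkt : k ≤ t) (hku : k ≤ u) :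
    t.choose k * u.choose k * (t + u) ^ (2 * k)
      ≤ 4 ^ k * (t * u) ^ k * (t + u).choose (2 * k) := by
  have h := key_nat k t u hkt hku
  rw [Nat.descFactorial_eq_factorial_mul_choose, Nat.descFactorial_eq_factorial_mul_choose,
    Nat.descFactorial_eq_factorial_mul_choose] at h
  have hpos : 0 < (2 * k).factorial * (k.factorial * k.factorial) :=
    Nat.mul_pos (Nat.factorial_pos _) (Nat.mul_pos (Nat.factorial_pos _) (Nat.factorial_pos _))
  apply Nat.le_of_mul_le_mul_left _ hpos
  calc (2 * k).factorial * (k.factorial * k.factorial)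
        * (t.choose k * u.choose k * (t + u) ^ (2 * k))
      = (2 * k).factorial * (k.factorial * t.choose k) * (k.factorial * u.choose k)
          * (t + u) ^ (2 * k) := by ring
    _ ≤ 4 ^ k * k.factorial ^ 2 * (t * u) ^ k
          * ((2 * k).factorial * (t + u).choose (2 * k)) := h
    _ = (2 * k).factorial * (k.factorial * k.factorial)
          * (4 ^ k * (t * u) ^ k * (t + u).choose (2 * k)) := by ring

/-- Probability bound for maliciously generated groups (Lemma in the paper). -/
theorem malicious_group_prob_bound (n_u t n : ℕ)
    (ht : 0 < t) (htu : t ≤ n_u) (hn : Even n) (hnt : n ≤ t)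
    (hhalf : n / 2 ≤ n_u - t) (hg : 1 ≤ n_u / n) :
    (1 / ((n_u / n : ℕ) : ℝ)) *
      (((t.choose (n / 2) : ℝ) * ((n_u - t).choose (n / 2) : ℝ)) / (n_u.choose n : ℝ)) ≤
    ((2 : ℝ) ^ n / ((n_u / n : ℕ) : ℝ)) *
      (((n_u : ℝ) - (t : ℝ)) / (t : ℝ)) ^ (n / 2) * ((t : ℝ) / (n_u : ℝ)) ^ n := by
  obtain ⟨m, hm⟩ := hn
  set k := n / 2 with hk
  have hn2 : n = 2 * k := by omega
  set u := n_u - t with hu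
  set g := n_u / n with hgdef
  have hN : n_u = t + u := by omega
  have hkt : k ≤ t := by omega
  have hku : k ≤ u := hhalf
  have hNpos : 0 < n_u := lt_of_lt_of_le ht htu
  have hchoosepos : 0 < (n_u.choose n : ℝ) := by
    exact_mod_cast Nat.choose_pos (by omega : n ≤ n_u)
  have hcast : ((n_u : ℝ) - (t : ℝ)) = (u : ℝ) := by
    rw [hu]; push_cast [htu]; ring
  -- core inequality
  have hcore : ((t.choose k : ℝ) * ((u.choose k : ℝ))) / (n_u.choose n : ℝ)
      ≤ (4 : ℝ) ^ k * (u : ℝ) ^ k * (t : ℝ) ^ k / (n_u : ℝ) ^ (2 * k) := by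
    rw [div_le_div_iff₀ hchoosepos (by positivity)]
    have h' : t.choose k * u.choose k * n_u ^ (2 * k)
        ≤ 4 ^ k * u ^ k * t ^ k * n_u.choose n := by
      rw [hN, hn2]
      calc t.choose k * u.choose k * (t + u) ^ (2 * k)
          ≤ 4 ^ k * (t * u) ^ k * (t + u).choose (2 * k) := choose_key k t u hkt hku
        _ = 4 ^ k * u ^ k * t ^ k * (t + u).choose (2 * k) := by rw [mul_pow]; ring
    exact_mod_cast h'
  have hgpos : (0 : ℝ) < ((g : ℕ) : ℝ) := by
    have : 1 ≤ g := hg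
    exact_mod_cast lt_of_lt_of_le zero_lt_one this
  have htpos : (0 : ℝ) < (t : ℝ) := by exact_mod_cast ht
  have hNpos' : (0 : ℝ) < (n_u : ℝ) := by exact_mod_cast hNpos
  have hgne : ((g : ℕ) : ℝ) ≠ 0 := ne_of_gt hgpos
  have htne : (t : ℝ) ≠ 0 := ne_of_gt htpos
  have hNne : (n_u : ℝ) ≠ 0 := ne_of_gt hNpos'
  have hrhs : ((2 : ℝ) ^ n / ((g : ℕ) : ℝ)) *
      (((n_u : ℝ) - (t : ℝ)) / (t : ℝ)) ^ k * ((t : ℝ) / (n_u : ℝ)) ^ n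
      = (1 / ((g : ℕ) : ℝ)) *
        ((4 : ℝ) ^ k * (u : ℝ) ^ k * (t : ℝ) ^ k / (n_u : ℝ) ^ (2 * k)) := by
    rw [hcast, hn2]
    have h2 : (2 : ℝ) ^ (2 * k) = 4 ^ k := by
      rw [pow_mul]; norm_num
    have ht2 : (t : ℝ) ^ (2 * k) = (t : ℝ) ^ k * (t : ℝ) ^ k := by
      rw [two_mul, pow_add]
    rw [div_pow, div_pow, h2, ht2, div_mul_div_comm, div_mul_div_comm, div_mul_div_comm,
      div_eq_div_iff (mul_ne_zero (mul_ne_zero hgne (pow_ne_zero _ htne))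
        (pow_ne_zero _ hNne)) (mul_ne_zero hgne (pow_ne_zero _ hNne))]
    ring
  rw [hrhs]
  exact mul_le_mul_of_nonneg_left hcore (by positivity)
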